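/- Suppose n ∈ L^∞(D), n ≥ 1 + δ. Define T : H → H on H = H₀²(D) × L²(D) by A(T(f,g),(v,z)) = B((f,g),(v,z)) for all (v,z) ∈ H, where A((u,ω),(v,z)) = ((n−1)⁻¹Δu, Δv)₀ + (ω,z)₀ and B is as in the linearized transmission eigenvalue problem. Then T is a compact operator on H. -/

import Mathlib

open scoped ComplexInnerProductSpace ComplexConjugate


theorem aux_isCompactOperator_of_bound {E F G : Type*}
    [NormedAddCommGroup E] [NormedSpace ℂ E]
    [NormedAddCommGroup F] [NormedSpace ℂ F] [CompleteSpace F]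
    [NormedAddCommGroup G] [NormedSpace ℂ G]
    (T : E →ₗ[ℂ] F) (K : E →ₗ[ℂ] G) (hK : IsCompactOperator K)
    (h : ∀ ε : ℝ, 0 < ε → ∃ δ : ℝ, 0 < δ ∧
      ∀ x : E, ‖x‖ ≤ 2 → ‖K x‖ < δ → ‖T x‖ < ε) :
    IsCompactOperator T := by
  rw [isCompactOperator_iff_isCompact_closure_image_ball T one_pos,
    isCompact_iff_totallyBounded_isComplete]
  refine ⟨TotallyBounded.closure ?_, isClosed_closure.isComplete⟩
  have hKtb : TotallyBounded (⇑K '' Metric.ball 0 1) :=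
    (hK.isCompact_closure_image_ball 1).totallyBounded.subset subset_closure
  rw [Metric.totallyBounded_iff]
  intro ε hε
  obtain ⟨δ, hδ, hδε⟩ := h ε hε
  obtain ⟨t, hts, htf, htcover⟩ := totallyBounded_iff_subset.mp hKtb
    {p : G × G | dist p.1 p.2 < δ} (Metric.dist_mem_uniformity hδ)
  have hex : ∀ y : G, ∃ x : E, y ∈ t → (x ∈ Metric.ball (0:E) 1 ∧ K x = y) := by
    intro y
    by_cases hy : y ∈ t
    · obtain ⟨x, hx, hxy⟩ := hts hy
      exact ⟨x, fun _ => ⟨hx, hxy⟩⟩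
    · exact ⟨0, fun h => absurd h hy⟩
  choose ψ hψ using hex
  refine ⟨(fun y => T (ψ y)) '' t, htf.image _, ?_⟩
  rintro _ ⟨x, hx, rfl⟩
  have hKx := htcover (Set.mem_image_of_mem (⇑K) hx)
  rw [Set.mem_iUnion₂] at hKx
  obtain ⟨y, hyt, hy⟩ := hKx
  have h1 := (hψ y hyt).1
  have h2 := (hψ y hyt).2
  refine Set.mem_biUnion (Set.mem_image_of_mem _ hyt) ?_
  rw [Metric.mem_ball, dist_eq_norm, ← map_sub]
  apply hδε
  · have hx1 : ‖x‖ < 1 := by simpa [dist_eq_norm] using hx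
    have hψ1 : ‖ψ y‖ < 1 := by simpa [dist_eq_norm] using h1
    calc ‖x - ψ y‖ ≤ ‖x‖ + ‖ψ y‖ := norm_sub_le _ _
      _ ≤ 2 := by linarith
  · rw [map_sub, h2, ← dist_eq_norm]
    exact hy

theorem aux_adjoint_isCompact {W V1 : Type*}
    [NormedAddCommGroup W] [InnerProductSpace ℂ W] [CompleteSpace W]
    [NormedAddCommGroup V1] [InnerProductSpace ℂ V1] [CompleteSpace V1]
    (J1 : V1 →L[ℂ] W) (h : IsCompactOperator J1) :
    IsCompactOperator (ContinuousLinearMap.adjoint J1) := by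
  have := aux_isCompactOperator_of_bound
    (ContinuousLinearMap.adjoint J1).toLinearMap
    ((J1.comp (ContinuousLinearMap.adjoint J1)).toLinearMap)
    (h.comp_clm (ContinuousLinearMap.adjoint J1)) ?_
  · exact this
  · intro ε hε
    refine ⟨ε ^ 2 / 2, by positivity, ?_⟩
    intro x hx2 hKx
    show ‖ContinuousLinearMap.adjoint J1 x‖ < ε
    set A := ContinuousLinearMap.adjoint J1
    have key : ‖A x‖ ^ 2 ≤ ‖J1 (A x)‖ * ‖x‖ := by
      have h1 : (‖A x‖ : ℝ) ^ 2 = RCLike.re (⟪A x, A x⟫) := by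
        rw [inner_self_eq_norm_sq]
      have h2 : (⟪A x, A x⟫) = ⟪x, J1 (A x)⟫ :=
        ContinuousLinearMap.adjoint_inner_left J1 (A x) x
      calc ‖A x‖ ^ 2 = RCLike.re (⟪x, J1 (A x)⟫) := by rw [h1, h2]
        _ ≤ ‖(⟪x, J1 (A x)⟫)‖ := RCLike.re_le_norm _
        _ ≤ ‖x‖ * ‖J1 (A x)‖ := norm_inner_le_norm _ _
        _ = ‖J1 (A x)‖ * ‖x‖ := mul_comm _ _
    have hkey2 : ‖A x‖ ^ 2 < ε ^ 2 := by
      have hJn : (0:ℝ) ≤ ‖J1 (A x)‖ := norm_nonneg _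
      calc ‖A x‖ ^ 2 ≤ ‖J1 (A x)‖ * ‖x‖ := key
        _ ≤ ‖J1 (A x)‖ * 2 := by nlinarith
        _ < (ε ^ 2 / 2) * 2 := by
            have : ‖J1 (A x)‖ < ε ^ 2 / 2 := hKx
            linarith
        _ = ε ^ 2 := by ring
    nlinarith [norm_nonneg (A x)]

theorem aux_arith {a cD R0 N d j21 u0 jf q2 q3 : ℝ} (ha : 0 < a) (hcD : 0 < cD)
    (hd : 0 ≤ d) (hj21 : 0 ≤ j21) (hN : 0 ≤ N) (hR0 : 0 ≤ R0) (hu0 : 0 ≤ u0)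
    (hjfN : jf ≤ N) (h2N : q2 ≤ N) (h3N : q3 ≤ N)
    (hcoer : a * d ^ 2 ≤ d * (R0 * jf) + j21 * q2 + j21 * q3)
    (hj21d : j21 * cD ≤ d) (hud : cD * u0 ≤ d) :
    u0 ≤ ((R0 + 2 / cD) / (a * cD)) * N := by
  have hM : a * d ≤ (R0 + 2 / cD) * N := by
    rcases eq_or_lt_of_le hd with h0 | h0
    · rw [← h0, mul_zero]; positivity
    · apply le_of_mul_le_mul_right _ h0
      have hj21' : j21 ≤ d / cD := (le_div_iff₀ hcD).mpr hj21d
      have e1 : d * (R0 * jf) ≤ d * (R0 * N) :=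
        mul_le_mul_of_nonneg_left (mul_le_mul_of_nonneg_left hjfN hR0) h0.le
      have e2 : j21 * q2 ≤ (d / cD) * N :=
        le_trans (mul_le_mul_of_nonneg_left h2N hj21)
          (mul_le_mul_of_nonneg_right hj21' hN)
      have e3 : j21 * q3 ≤ (d / cD) * N :=
        le_trans (mul_le_mul_of_nonneg_left h3N hj21)
          (mul_le_mul_of_nonneg_right hj21' hN)
      calc a * d * d = a * d ^ 2 := by ring
        _ ≤ d * (R0 * N) + (d / cD) * N + (d / cD) * N := by linarith
        _ = (R0 + 2 / cD) * N * d := by field_simp; ring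
  rw [div_mul_eq_mul_div, le_div_iff₀ (by positivity)]
  have h1 : a * (cD * u0) ≤ a * d := mul_le_mul_of_nonneg_left hud ha.le
  nlinarith [h1, hM]

/-- The solution operator `T` of the linearized transmission eigenvalue problem, defined on
`H = H₀²(D) × L²(D)` by `A(T(f,g),(v,z)) = B((f,g),(v,z))`, is compact.  Abstractly:
`V = H₀²(D)`, `V1 = H₀¹(D)`, `W = L²(D)`; `J : V → W` and `J1 : V1 → W` are the (compact)
embeddings, `J21 : V → V1` the intermediate embedding, `Dl` the Laplacian (yielding an
equivalent norm on `V`), `R` multiplication by `(n-1)⁻¹` (selfadjoint, coercive) and `Q`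
multiplication by `n(n-1)⁻¹`. -/
theorem stmt13 {V V1 W : Type*}
    [NormedAddCommGroup V] [InnerProductSpace ℂ V] [CompleteSpace V]
    [NormedAddCommGroup V1] [InnerProductSpace ℂ V1] [CompleteSpace V1]
    [NormedAddCommGroup W] [InnerProductSpace ℂ W] [CompleteSpace W]
    (J Dl : V →L[ℂ] W) (J21 : V →L[ℂ] V1) (J1 : V1 →L[ℂ] W) (R Q : W →L[ℂ] W)
    (hR : IsSelfAdjoint R)
    (a cD : ℝ) (ha : 0 < a) (hcD : 0 < cD)
    (hRcoer : ∀ w : W, a * ‖w‖ ^ 2 ≤ (⟪w, R w⟫ : ℂ).re)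
    (hDlow : ∀ u : V, cD * ‖u‖ ≤ ‖Dl u‖)
    (hJfact : ∀ v : V, J1 (J21 v) = J v)
    (hJ21 : ∀ v : V, ‖J21 v‖ ≤ ‖v‖)
    (hJbd : ∀ v : V, ‖J v‖ ≤ ‖v‖)
    (hQsym : ∀ x y : W, ⟪Q y, x⟫ = ⟪y, Q x⟫)
    (hJcompact : IsCompactOperator J)
    (hJ1compact : IsCompactOperator J1)
    (T : V × W →L[ℂ] V × W)
    (hT : ∀ (f v : V) (g z : W),
      ⟪Dl v, R (Dl (T (f, g)).1)⟫ + ⟪z, (T (f, g)).2⟫ =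
        -⟪Dl v, R (J f)⟫ - ⟪Q (J v), Dl f⟫ - ⟪J v, Q g⟫ + ⟪z, J f⟫) :
    IsCompactOperator T := by
  classical
  set A1 : W →L[ℂ] V1 := ContinuousLinearMap.adjoint J1 with hA1def
  -- the second component of T (f, g) is J f
  have hT2 : ∀ (f : V) (g : W), (T (f, g)).2 = J f := by
    intro f g
    apply ext_inner_left ℂ
    intro z
    have h := hT f 0 g z
    simpa using h
  -- the compact comparison operator
  set Kt : V × W →L[ℂ] W × (V1 × V1) :=
    (J.comp (ContinuousLinearMap.fst ℂ V W)).prod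
      (((A1.comp Q).comp (Dl.comp (ContinuousLinearMap.fst ℂ V W))).prod
        ((A1.comp Q).comp (ContinuousLinearMap.snd ℂ V W))) with hKtdef
  have hA1c : IsCompactOperator A1 := aux_adjoint_isCompact J1 hJ1compact
  have hF1 : IsCompactOperator (fun p : V × W => J p.1) :=
    hJcompact.comp_clm (ContinuousLinearMap.fst ℂ V W)
  have hF2 : IsCompactOperator (fun p : V × W => A1 (Q (Dl p.1))) :=
    hA1c.comp_clm (Q.comp (Dl.comp (ContinuousLinearMap.fst ℂ V W)))
  have hF3 : IsCompactOperator (fun p : V × W => A1 (Q p.2)) :=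
    hA1c.comp_clm (Q.comp (ContinuousLinearMap.snd ℂ V W))
  have hKt : IsCompactOperator Kt := by
    rw [isCompactOperator_iff_exists_mem_nhds_image_subset_compact]
    obtain ⟨U1, hU1, C1, hC1, hs1⟩ :=
      (isCompactOperator_iff_exists_mem_nhds_image_subset_compact _).mp hF1
    obtain ⟨U2, hU2, C2, hC2, hs2⟩ :=
      (isCompactOperator_iff_exists_mem_nhds_image_subset_compact _).mp hF2
    obtain ⟨U3, hU3, C3, hC3, hs3⟩ :=
      (isCompactOperator_iff_exists_mem_nhds_image_subset_compact _).mp hF3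
    refine ⟨U1 ∩ (U2 ∩ U3), Filter.inter_mem hU1 (Filter.inter_mem hU2 hU3),
      C1 ×ˢ (C2 ×ˢ C3), hC1.prod (hC2.prod hC3), ?_⟩
    rintro _ ⟨p, hp, rfl⟩
    exact Set.mem_prod.mpr ⟨hs1 ⟨p, hp.1, rfl⟩,
      Set.mem_prod.mpr ⟨hs2 ⟨p, hp.2.1, rfl⟩, hs3 ⟨p, hp.2.2, rfl⟩⟩⟩
  -- the norm bound
  have hC0 : (0:ℝ) < max 1 ((‖R‖ + 2 / cD) / (a * cD)) :=
    lt_of_lt_of_le zero_lt_one (le_max_left _ _)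
  set C : ℝ := max 1 ((‖R‖ + 2 / cD) / (a * cD)) with hCdef
  have hbound : ∀ p : V × W, ‖T p‖ ≤ C * ‖Kt p‖ := by
    rintro ⟨f, g⟩
    set u : V := (T (f, g)).1 with hu
    have hN0 : (0:ℝ) ≤ ‖Kt (f, g)‖ := norm_nonneg _
    have hJfN : ‖J f‖ ≤ ‖Kt (f, g)‖ := norm_fst_le (Kt (f, g))
    have h2N : ‖A1 (Q (Dl f))‖ ≤ ‖Kt (f, g)‖ :=
      le_trans (norm_fst_le ((Kt (f, g)).2)) (norm_snd_le (Kt (f, g)))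
    have h3N : ‖A1 (Q g)‖ ≤ ‖Kt (f, g)‖ :=
      le_trans (norm_snd_le ((Kt (f, g)).2)) (norm_snd_le (Kt (f, g)))
    have heq := hT f u g 0
    simp only [inner_zero_left, add_zero] at heq
    have e2 : ⟪Q (J u), Dl f⟫ = ⟪J21 u, A1 (Q (Dl f))⟫ := by
      rw [hQsym (Dl f) (J u), ← hJfact u]
      exact (ContinuousLinearMap.adjoint_inner_right J1 (J21 u) (Q (Dl f))).symm
    have e3 : ⟪J u, Q g⟫ = ⟪J21 u, A1 (Q g)⟫ := by
      rw [← hJfact u]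
      exact (ContinuousLinearMap.adjoint_inner_right J1 (J21 u) (Q g)).symm
    rw [e2, e3] at heq
    have hcoer := hRcoer (Dl u)
    rw [heq] at hcoer
    -- bound the real part
    have hre : (-⟪Dl u, R (J f)⟫ - ⟪J21 u, A1 (Q (Dl f))⟫ - ⟪J21 u, A1 (Q g)⟫ : ℂ).re ≤
        ‖Dl u‖ * (‖R‖ * ‖J f‖) + ‖J21 u‖ * ‖A1 (Q (Dl f))‖ + ‖J21 u‖ * ‖A1 (Q g)‖ := by
      have t1 : ‖(⟪Dl u, R (J f)⟫ : ℂ)‖ ≤ ‖Dl u‖ * (‖R‖ * ‖J f‖) :=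
        le_trans (norm_inner_le_norm _ _)
          (mul_le_mul_of_nonneg_left (R.le_opNorm (J f)) (norm_nonneg _))
      have t2 : ‖(⟪J21 u, A1 (Q (Dl f))⟫ : ℂ)‖ ≤ ‖J21 u‖ * ‖A1 (Q (Dl f))‖ :=
        norm_inner_le_norm _ _
      have t3 : ‖(⟪J21 u, A1 (Q g)⟫ : ℂ)‖ ≤ ‖J21 u‖ * ‖A1 (Q g)‖ :=
        norm_inner_le_norm _ _
      have hnorm : ‖(-⟪Dl u, R (J f)⟫ - ⟪J21 u, A1 (Q (Dl f))⟫ - ⟪J21 u, A1 (Q g)⟫ : ℂ)‖ ≤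
          ‖(⟪Dl u, R (J f)⟫ : ℂ)‖ + ‖(⟪J21 u, A1 (Q (Dl f))⟫ : ℂ)‖ +
            ‖(⟪J21 u, A1 (Q g)⟫ : ℂ)‖ := by
        calc ‖(-⟪Dl u, R (J f)⟫ - ⟪J21 u, A1 (Q (Dl f))⟫ - ⟪J21 u, A1 (Q g)⟫ : ℂ)‖
            ≤ ‖(-⟪Dl u, R (J f)⟫ - ⟪J21 u, A1 (Q (Dl f))⟫ : ℂ)‖ +
              ‖(⟪J21 u, A1 (Q g)⟫ : ℂ)‖ := norm_sub_le _ _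
          _ ≤ ‖(-⟪Dl u, R (J f)⟫ : ℂ)‖ + ‖(⟪J21 u, A1 (Q (Dl f))⟫ : ℂ)‖ +
              ‖(⟪J21 u, A1 (Q g)⟫ : ℂ)‖ := by
                have := norm_sub_le (-⟪Dl u, R (J f)⟫ : ℂ) (⟪J21 u, A1 (Q (Dl f))⟫ : ℂ)
                linarith
          _ = ‖(⟪Dl u, R (J f)⟫ : ℂ)‖ + ‖(⟪J21 u, A1 (Q (Dl f))⟫ : ℂ)‖ +
              ‖(⟪J21 u, A1 (Q g)⟫ : ℂ)‖ := by rw [norm_neg]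
      have hrele := Complex.re_le_norm
        (-⟪Dl u, R (J f)⟫ - ⟪J21 u, A1 (Q (Dl f))⟫ - ⟪J21 u, A1 (Q g)⟫ : ℂ)
      linarith
    have hJ21u : ‖J21 u‖ * cD ≤ ‖Dl u‖ :=
      calc ‖J21 u‖ * cD ≤ ‖u‖ * cD := mul_le_mul_of_nonneg_right (hJ21 u) hcD.le
        _ = cD * ‖u‖ := mul_comm _ _
        _ ≤ ‖Dl u‖ := hDlow u
    have hu_le : ‖u‖ ≤ ((‖R‖ + 2 / cD) / (a * cD)) * ‖Kt (f, g)‖ :=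
      aux_arith ha hcD (norm_nonneg (Dl u)) (norm_nonneg (J21 u)) hN0
        (norm_nonneg R) (norm_nonneg u) hJfN h2N h3N (le_trans hcoer hre)
        hJ21u (hDlow u)
    have hnormT : ‖T (f, g)‖ = max ‖u‖ ‖J f‖ := by
      rw [Prod.norm_def, hT2 f g]
    rw [hnormT]
    apply max_le
    · exact hu_le.trans (mul_le_mul_of_nonneg_right (le_max_right _ _) hN0)
    · calc ‖J f‖ ≤ ‖Kt (f, g)‖ := hJfN
        _ = 1 * ‖Kt (f, g)‖ := (one_mul _).symm
        _ ≤ C * ‖Kt (f, g)‖ := mul_le_mul_of_nonneg_right (le_max_left _ _) hN0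
  -- conclude via the domination lemma
  refine aux_isCompactOperator_of_bound T.toLinearMap Kt.toLinearMap hKt ?_
  intro ε hε
  refine ⟨ε / C, div_pos hε hC0, fun x _ hKx => ?_⟩
  calc ‖T x‖ ≤ C * ‖Kt x‖ := hbound x
    _ < C * (ε / C) := mul_lt_mul_of_pos_left hKx hC0
    _ = ε := by field_simp
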